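/- For any complex z with |z| ≤ ρ and any α = n + (d−2)/2 with d ≥ 2 an integer and n ≥ 10(ρ+1)² an integer, the derivative of the Bessel function of the first kind satisfies |J'_α(z)| ≤ 3·(|z|/2)^{α−1}/Γ(α). -/

import Mathlib

set_option maxHeartbeats 1000000

/-- The Bessel function of the first kind of order `α`,
`J_α(z) = Σ_{m≥0} (−1)^m (z/2)^{2m+α} / (Γ(m+1) Γ(m+α+1))`. -/
noncomputable def besselJ (α : ℝ) (z : ℂ) : ℂ :=
  ∑' m : ℕ, ((-1) ^ m / (Complex.Gamma (m + 1) * Complex.Gamma ((m : ℂ) + (α : ℂ) + 1)))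
      * (z / 2) ^ ((2 * m : ℕ) + (α : ℂ))

open Complex

noncomputable def besselCoef (α : ℝ) (m : ℕ) : ℂ :=
  (-1) ^ m / (Complex.Gamma (m + 1) * Complex.Gamma ((m : ℂ) + (α : ℂ) + 1))

noncomputable def besselG (α : ℝ) (z : ℂ) : ℂ :=
  ∑' m : ℕ, besselCoef α m * (z / 2) ^ (2 * m)

lemma besselCoef_norm {α : ℝ} (hα : 0 < α) (m : ℕ) :
    ‖besselCoef α m‖ = 1 / (m.factorial * Real.Gamma (m + α + 1)) := by
  have h1 : Complex.Gamma ((m : ℂ) + 1) = (m.factorial : ℂ) :=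
    Complex.Gamma_nat_eq_factorial m
  have h2 : ((m : ℂ) + (α : ℂ) + 1) = ((m + α + 1 : ℝ) : ℂ) := by push_cast; ring
  have h3 : Complex.Gamma ((m : ℂ) + (α : ℂ) + 1) = ((Real.Gamma (m + α + 1) : ℝ) : ℂ) := by
    rw [h2, Complex.Gamma_ofReal]
  have hg : (0:ℝ) < Real.Gamma (m + α + 1) :=
    Real.Gamma_pos_of_pos (by positivity)
  rw [besselCoef, h1, h3, norm_div, norm_pow, norm_neg, norm_one, one_pow, norm_mul]
  simp [Complex.norm_real, abs_of_pos hg, Complex.norm_natCast]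

lemma gamma_lower {α : ℝ} (hα : 0 < α) (m : ℕ) :
    Real.Gamma (α + 1) * α ^ m ≤ Real.Gamma (m + α + 1) := by
  induction m with
  | zero => simp
  | succ k ih =>
    have hk : ((k:ℝ) + α + 1) ≠ 0 := by positivity
    have : Real.Gamma ((k:ℝ) + α + 1 + 1) = ((k:ℝ) + α + 1) * Real.Gamma ((k:ℝ) + α + 1) :=
      Real.Gamma_add_one hk
    have hcast : ((k+1 : ℕ) : ℝ) + α + 1 = (k:ℝ) + α + 1 + 1 := by push_cast; ring
    rw [hcast, this, pow_succ]
    have hg : (0:ℝ) < Real.Gamma ((k:ℝ) + α + 1) := Real.Gamma_pos_of_pos (by positivity)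
    calc Real.Gamma (α+1) * (α ^ k * α) = α * (Real.Gamma (α+1) * α ^ k) := by ring
    _ ≤ ((k:ℝ) + α + 1) * Real.Gamma ((k:ℝ)+α+1) := by
        apply mul_le_mul (by linarith) ih (by positivity) (by positivity)

noncomputable def besselGD (α : ℝ) (z : ℂ) : ℂ :=
  ∑' m : ℕ, besselCoef α m * ((2 * m) * (z / 2) ^ (2 * m - 1) * (1 / 2))

lemma summable_geo40 : Summable (fun m : ℕ => ((1:ℝ)/40) ^ m) :=
  summable_geometric_of_lt_one (by norm_num) (by norm_num)

lemma tsum_geo40 : ∑' m : ℕ, ((1:ℝ)/40) ^ m = 40/39 := by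
  rw [tsum_geometric_of_lt_one (by norm_num) (by norm_num)]
  norm_num

section bounds

variable {ρ α : ℝ} (hρ : 0 < ρ) (hα : 10 * (ρ + 1) ^ 2 ≤ α)

include hρ hα

lemma alpha_pos : (0:ℝ) < α := lt_of_lt_of_le (by positivity) hα

lemma alpha_ten : (10:ℝ) ≤ α := by nlinarith

lemma q2_le : ((ρ + 1)/2)^2 * 40 ≤ α := by nlinarith

lemma term_bound {z : ℂ} (hz : ‖z‖ ≤ ρ + 1) (m : ℕ) :
    ‖besselCoef α m * (z / 2) ^ (2 * m)‖ ≤ (1 / Real.Gamma (α + 1)) * (1/40) ^ m := by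
  have hαpos := alpha_pos hρ hα
  have hΓ1 : (0:ℝ) < Real.Gamma (α + 1) := Real.Gamma_pos_of_pos (by positivity)
  have hΓm : (0:ℝ) < Real.Gamma (m + α + 1) := Real.Gamma_pos_of_pos (by positivity)
  have hfac : (0:ℝ) < m.factorial := by positivity
  rw [norm_mul, besselCoef_norm hαpos, norm_pow, norm_div]
  have hq : ‖z‖ / ‖(2:ℂ)‖ ≤ (ρ + 1)/2 := by
    rw [Complex.norm_ofNat]
    exact div_le_div_of_nonneg_right hz (by norm_num) |>.trans_eq rfl
  have h1 : (‖z‖ / ‖(2:ℂ)‖) ^ (2*m) ≤ ((ρ+1)/2) ^ (2*m) :=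
    pow_le_pow_left₀ (by positivity) hq _
  have h2 : ((ρ+1)/2) ^ (2*m) = (((ρ+1)/2)^2) ^ m := by rw [pow_mul]
  have h3 : (((ρ+1)/2)^2) ^ m ≤ (α/40) ^ m :=
    pow_le_pow_left₀ (by positivity) (by nlinarith [q2_le hρ hα]) m
  have h4 : Real.Gamma (α + 1) * α ^ m ≤ Real.Gamma (m + α + 1) := gamma_lower hαpos m
  calc 1 / (m.factorial * Real.Gamma (m + α + 1)) * (‖z‖ / ‖(2:ℂ)‖) ^ (2*m)
      ≤ 1 / (1 * (Real.Gamma (α+1) * α ^ m)) * (α/40) ^ m := by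
        apply mul_le_mul
        · apply one_div_le_one_div_of_le (by positivity)
          apply mul_le_mul (by exact_mod_cast Nat.one_le_cast.mpr m.factorial_pos) h4
            (by positivity) (by positivity)
        · exact h1.trans (h2 ▸ h3)
        · positivity
        · positivity
    _ = (1 / Real.Gamma (α + 1)) * (1/40) ^ m := by
        rw [one_mul, div_pow]
        field_simp
        rw [← mul_pow]; norm_num

lemma deriv_term_bound {z : ℂ} (hz : ‖z‖ ≤ ρ + 1) (m : ℕ) :
    ‖besselCoef α m * ((2 * m) * (z / 2) ^ (2 * m - 1) * (1 / 2))‖ ≤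
      (2/(ρ+1)) * (1 / Real.Gamma (α + 1)) * (1/40) ^ m := by
  have hαpos := alpha_pos hρ hα
  have hΓ1 : (0:ℝ) < Real.Gamma (α + 1) := Real.Gamma_pos_of_pos (by positivity)
  rcases Nat.eq_zero_or_pos m with rfl | hm
  · simp; positivity
  have hΓm : (0:ℝ) < Real.Gamma (m + α + 1) := Real.Gamma_pos_of_pos (by positivity)
  rw [norm_mul, besselCoef_norm hαpos, norm_mul, norm_mul, norm_pow, norm_div]
  have h2m : ((2:ℂ) * m) = ((2 * m : ℕ) : ℂ) := by push_cast; ring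
  rw [h2m, Complex.norm_natCast]
  have hq : ‖z‖ / ‖(2:ℂ)‖ ≤ (ρ + 1)/2 := by
    rw [Complex.norm_ofNat]; exact div_le_div_of_nonneg_right hz (by norm_num)
  have hqpos : (0:ℝ) < (ρ+1)/2 := by positivity
  have h1 : (‖z‖ / ‖(2:ℂ)‖) ^ (2*m-1) ≤ ((ρ+1)/2) ^ (2*m-1) :=
    pow_le_pow_left₀ (by positivity) hq _
  have key : ((ρ+1)/2) ^ (2*m-1) * ((ρ+1)/2) = (((ρ+1)/2)^2) ^ m := by
    rw [← pow_succ, ← pow_mul]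
    congr 1
    omega
  have h3 : (((ρ+1)/2)^2) ^ m ≤ (α/40) ^ m :=
    pow_le_pow_left₀ (by positivity) (by nlinarith [q2_le hρ hα]) m
  have h4 : Real.Gamma (α + 1) * α ^ m ≤ Real.Gamma (m + α + 1) := gamma_lower hαpos m
  have hmfac : (m:ℝ) ≤ m.factorial := by exact_mod_cast Nat.self_le_factorial m
  have hfacpos : (0:ℝ) < m.factorial := by positivity
  have hn12 : ‖(1:ℂ)/2‖ = 1/2 := by norm_num
  rw [hn12]
  -- LHS = 1/(m! Γ) * (2m * q'^(2m-1) * 1/2) where q' = ‖z‖/2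
  have lhs_le : 1 / ((m.factorial:ℝ) * Real.Gamma (m + α + 1)) *
      ((2*m:ℕ) * (‖z‖ / ‖(2:ℂ)‖) ^ (2*m-1) * (1/2)) ≤
      1 / ((m:ℝ) * (Real.Gamma (α+1) * α ^ m)) * ((m:ℝ) * ((ρ+1)/2) ^ (2*m-1)) := by
    have e1 : ((2*m:ℕ):ℝ) * (‖z‖ / ‖(2:ℂ)‖) ^ (2*m-1) * (1/2) =
        (m:ℝ) * (‖z‖ / ‖(2:ℂ)‖) ^ (2*m-1) := by push_cast; ring
    rw [e1]
    apply mul_le_mul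
    · apply one_div_le_one_div_of_le (by positivity)
      apply mul_le_mul hmfac h4 (by positivity) (by positivity)
    · exact mul_le_mul_of_nonneg_left h1 (by positivity)
    · positivity
    · positivity
  refine lhs_le.trans ?_
  have hmpos : (0:ℝ) < m := by exact_mod_cast hm
  rw [show 1 / ((m:ℝ) * (Real.Gamma (α+1) * α ^ m)) * ((m:ℝ) * ((ρ+1)/2) ^ (2*m-1)) =
      (1/(Real.Gamma (α+1) * α ^ m)) * ((ρ+1)/2) ^ (2*m-1) by field_simp]
  -- multiply and divide by q
  have : (1/(Real.Gamma (α+1) * α ^ m)) * ((ρ+1)/2) ^ (2*m-1) =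
      (2/(ρ+1)) * (1/(Real.Gamma (α+1) * α ^ m)) * ((((ρ+1)/2)^2) ^ m) := by
    rw [← key]; field_simp
  rw [this]
  have : (2/(ρ+1)) * (1/(Real.Gamma (α+1) * α ^ m)) * ((((ρ+1)/2)^2) ^ m) ≤
      (2/(ρ+1)) * (1/(Real.Gamma (α+1) * α ^ m)) * ((α/40) ^ m) :=
    mul_le_mul_of_nonneg_left h3 (by positivity)
  refine this.trans ?_
  apply le_of_eq
  rw [div_pow]
  field_simp
  rw [← mul_pow]; norm_num

lemma summable_term {z : ℂ} (hz : ‖z‖ ≤ ρ + 1) :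
    Summable (fun m : ℕ => besselCoef α m * (z / 2) ^ (2 * m)) := by
  apply Summable.of_norm_bounded (summable_geo40.mul_left (1 / Real.Gamma (α + 1)))
  exact term_bound hρ hα hz

lemma summable_deriv_term {z : ℂ} (hz : ‖z‖ ≤ ρ + 1) :
    Summable (fun m : ℕ => besselCoef α m * ((2 * m) * (z / 2) ^ (2 * m - 1) * (1 / 2))) := by
  apply Summable.of_norm_bounded
    (summable_geo40.mul_left (2/(ρ+1) * (1 / Real.Gamma (α + 1))))
  intro m
  have := deriv_term_bound hρ hα hz m
  calc ‖_‖ ≤ (2/(ρ+1)) * (1 / Real.Gamma (α + 1)) * (1/40) ^ m := this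
  _ = 2 / (ρ + 1) * (1 / Real.Gamma (α + 1)) * (1 / 40) ^ m := by ring

lemma term_hasDerivAt (m : ℕ) (w : ℂ) :
    HasDerivAt (fun z : ℂ => besselCoef α m * (z / 2) ^ (2 * m))
      (besselCoef α m * ((2 * m) * (w / 2) ^ (2 * m - 1) * (1 / 2))) w := by
  have base : HasDerivAt (fun z : ℂ => z / 2) (1/2) w := (hasDerivAt_id w).div_const 2
  have hp := base.fun_pow (2*m)
  have h2 := hp.const_mul (besselCoef α m)
  refine h2.congr_deriv ?_
  push_cast
  ring

lemma besselG_hasDerivAt {y : ℂ} (hy : ‖y‖ < ρ + 1) :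
    HasDerivAt (besselG α) (besselGD α y) y := by
  have hu : Summable (fun m : ℕ => (2/(ρ+1)) * (1 / Real.Gamma (α + 1)) * (1/40) ^ m) :=
    summable_geo40.mul_left (2/(ρ+1) * (1 / Real.Gamma (α + 1)))
  have hg : ∀ (m : ℕ) (w : ℂ), w ∈ Metric.ball (0:ℂ) (ρ+1) →
      HasDerivAt (fun z : ℂ => besselCoef α m * (z / 2) ^ (2 * m))
        (besselCoef α m * ((2 * m) * (w / 2) ^ (2 * m - 1) * (1 / 2))) w :=
    fun m w _ => term_hasDerivAt hρ hα m w
  have hg' : ∀ (m : ℕ) (w : ℂ), w ∈ Metric.ball (0:ℂ) (ρ+1) →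
      ‖besselCoef α m * ((2 * m) * (w / 2) ^ (2 * m - 1) * (1 / 2))‖ ≤
        (2/(ρ+1)) * (1 / Real.Gamma (α + 1)) * (1/40) ^ m := by
    intro m w hw
    rw [Metric.mem_ball, dist_zero_right] at hw
    exact deriv_term_bound hρ hα hw.le m
  have h0mem : (0:ℂ) ∈ Metric.ball (0:ℂ) (ρ+1) := by
    rw [Metric.mem_ball, dist_self]; linarith
  have hg0 : Summable fun m : ℕ => besselCoef α m * ((0:ℂ) / 2) ^ (2 * m) :=
    summable_term hρ hα (by rw [norm_zero]; positivity)
  have hymem : y ∈ Metric.ball (0:ℂ) (ρ+1) := by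
    rwa [Metric.mem_ball, dist_zero_right]
  exact hasDerivAt_tsum_of_isPreconnected hu Metric.isOpen_ball
    (convex_ball _ _).isPreconnected hg hg' h0mem hg0 hymem

lemma besselG_norm_le {z : ℂ} (hz : ‖z‖ ≤ ρ + 1) :
    ‖besselG α z‖ ≤ (1 / Real.Gamma (α + 1)) * (40/39) := by
  have hsum : Summable fun m : ℕ => ‖besselCoef α m * (z / 2) ^ (2 * m)‖ :=
    (summable_term hρ hα hz).norm
  calc ‖besselG α z‖ ≤ ∑' m : ℕ, ‖besselCoef α m * (z / 2) ^ (2 * m)‖ :=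
        norm_tsum_le_tsum_norm hsum
  _ ≤ ∑' m : ℕ, (1 / Real.Gamma (α + 1)) * (1/40) ^ m :=
        Summable.tsum_le_tsum (term_bound hρ hα hz) hsum (summable_geo40.mul_left _)
  _ = (1 / Real.Gamma (α + 1)) * (40/39) := by
        rw [tsum_mul_left, tsum_geo40]

lemma besselGD_norm_le {z : ℂ} (hz : ‖z‖ ≤ ρ + 1) :
    ‖besselGD α z‖ ≤ (2/(ρ+1)) * (1 / Real.Gamma (α + 1)) * (40/39) := by
  have hsum : Summable fun m : ℕ =>
      ‖besselCoef α m * ((2 * m) * (z / 2) ^ (2 * m - 1) * (1 / 2))‖ :=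
    (summable_deriv_term hρ hα hz).norm
  calc ‖besselGD α z‖ ≤ ∑' m : ℕ, ‖besselCoef α m * ((2*m) * (z / 2) ^ (2*m-1) * (1/2))‖ :=
        norm_tsum_le_tsum_norm hsum
  _ ≤ ∑' m : ℕ, (2/(ρ+1)) * (1 / Real.Gamma (α + 1)) * (1/40) ^ m :=
        Summable.tsum_le_tsum (deriv_term_bound hρ hα hz) hsum
          (summable_geo40.mul_left (2/(ρ+1) * (1 / Real.Gamma (α + 1))))
  _ = (2/(ρ+1)) * (1 / Real.Gamma (α + 1)) * (40/39) := by
        rw [tsum_mul_left, tsum_geo40]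

lemma besselG_ne_zero {z : ℂ} (hz : ‖z‖ ≤ ρ + 1) : besselG α z ≠ 0 := by
  have hαpos := alpha_pos hρ hα
  have hΓ1 : (0:ℝ) < Real.Gamma (α + 1) := Real.Gamma_pos_of_pos (by positivity)
  have hsum := summable_term hρ hα hz
  have hsplit : besselG α z = besselCoef α 0 * (z/2) ^ (2*0) +
      ∑' m : ℕ, besselCoef α (m+1) * (z/2) ^ (2*(m+1)) := Summable.tsum_eq_zero_add hsum
  have htail : ‖∑' m : ℕ, besselCoef α (m+1) * (z/2) ^ (2*(m+1))‖ ≤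
      (1 / Real.Gamma (α + 1)) * (1/39) := by
    have hsum' : Summable fun m : ℕ => ‖besselCoef α (m+1) * (z/2) ^ (2*(m+1))‖ :=
      ((hsum.norm).comp_injective (add_left_injective 1))
    calc ‖∑' m : ℕ, besselCoef α (m+1) * (z/2) ^ (2*(m+1))‖
        ≤ ∑' m : ℕ, ‖besselCoef α (m+1) * (z/2) ^ (2*(m+1))‖ := norm_tsum_le_tsum_norm hsum'
    _ ≤ ∑' m : ℕ, (1 / Real.Gamma (α + 1)) * (1/40) ^ (m+1) := by
        apply Summable.tsum_le_tsum (fun m => term_bound hρ hα hz (m+1)) hsum'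
        exact ((summable_geo40.mul_left (1 / Real.Gamma (α + 1))).comp_injective
          (add_left_injective 1))
    _ = (1 / Real.Gamma (α + 1)) * (1/39) := by
        rw [tsum_mul_left]
        have : ∑' m : ℕ, ((1:ℝ)/40) ^ (m+1) = (1/40) * (40/39) := by
          simp_rw [pow_succ']
          rw [tsum_mul_left, tsum_geo40]
        rw [this]; ring
  have hc0 : ‖besselCoef α 0 * (z/2) ^ (2*0)‖ = 1 / Real.Gamma (α + 1) := by
    rw [norm_mul, besselCoef_norm hαpos 0]
    norm_num
  intro h0
  rw [h0] at hsplit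
  have : ‖besselCoef α 0 * (z/2) ^ (2*0)‖ =
      ‖∑' m : ℕ, besselCoef α (m+1) * (z/2) ^ (2*(m+1))‖ := by
    rw [eq_neg_of_add_eq_zero_left hsplit.symm, norm_neg]
  rw [hc0] at this
  have : (1:ℝ) / Real.Gamma (α + 1) ≤ (1 / Real.Gamma (α + 1)) * (1/39) := this ▸ htail
  nlinarith [one_div_pos.mpr hΓ1]

lemma bessel_factor {z : ℂ} :
    (∑' m : ℕ, ((-1) ^ m / (Complex.Gamma (m + 1) * Complex.Gamma ((m : ℂ) + (α : ℂ) + 1)))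
      * (z / 2) ^ ((2 * m : ℕ) + (α : ℂ))) = (z / 2) ^ (α : ℂ) * besselG α z := by
  have hαpos := alpha_pos hρ hα
  have hαne : (α : ℂ) ≠ 0 := by
    simp only [ne_eq, Complex.ofReal_eq_zero]
    exact hαpos.ne'
  rcases eq_or_ne z 0 with rfl | hz
  · have h1 : ∀ m : ℕ, ((-1) ^ m / (Complex.Gamma (m + 1) * Complex.Gamma ((m : ℂ) + (α : ℂ) + 1)))
        * ((0:ℂ) / 2) ^ ((2 * m : ℕ) + (α : ℂ)) = 0 := by
      intro m
      have hexp : ((2 * m : ℕ) : ℂ) + (α : ℂ) ≠ 0 := by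
        intro h
        have := congrArg Complex.re h
        simp at this
        have : (0:ℝ) < (2*m : ℕ) + α := by positivity
        linarith
      rw [zero_div, Complex.zero_cpow hexp, mul_zero]
    rw [tsum_congr h1, tsum_zero, zero_div, Complex.zero_cpow hαne, zero_mul]
  · have hz2 : z / 2 ≠ 0 := div_ne_zero hz two_ne_zero
    have h1 : ∀ m : ℕ, ((-1) ^ m / (Complex.Gamma (m + 1) * Complex.Gamma ((m : ℂ) + (α : ℂ) + 1)))
        * (z / 2) ^ ((2 * m : ℕ) + (α : ℂ)) =
        (besselCoef α m * (z / 2) ^ (2 * m)) * (z / 2) ^ (α : ℂ) := by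
      intro m
      rw [Complex.cpow_add _ _ hz2, Complex.cpow_natCast, besselCoef]
      ring
    rw [tsum_congr h1, tsum_mul_right, mul_comm]
    rfl

lemma besselJ_eq : besselJ α = fun z => (z / 2) ^ (α : ℂ) * besselG α z := by
  funext z
  rw [besselJ]
  exact bessel_factor hρ hα

lemma cpow_slit_hasDerivAt {z : ℂ} (hs : z ∈ Complex.slitPlane) :
    HasDerivAt (fun w : ℂ => (w / 2) ^ (α : ℂ))
      ((α : ℂ) * (z / 2) ^ ((α : ℂ) - 1) * (1 / 2)) z := by
  have base : HasDerivAt (fun w : ℂ => w / 2) (1/2) z := (hasDerivAt_id z).div_const 2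
  have hs2 : z / 2 ∈ Complex.slitPlane := by
    rw [Complex.mem_slitPlane_iff] at hs ⊢
    rcases hs with h | h
    · left; simpa using by positivity
    · right; simpa using h
  exact base.cpow_const hs2

lemma cpow_nat_hasDerivAt {N : ℕ} (hN : 1 ≤ N) (hNα : (N : ℝ) = α) {z : ℂ} (hz : z ≠ 0) :
    HasDerivAt (fun w : ℂ => (w / 2) ^ (α : ℂ))
      ((α : ℂ) * (z / 2) ^ ((α : ℂ) - 1) * (1 / 2)) z := by
  have hfun : (fun w : ℂ => (w / 2) ^ (α : ℂ)) = fun w : ℂ => (w / 2) ^ N := by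
    funext w
    rw [← hNα]
    push_cast
    exact Complex.cpow_natCast _ N
  have base : HasDerivAt (fun w : ℂ => w / 2) (1/2) z := (hasDerivAt_id z).div_const 2
  have hp := base.fun_pow N
  rw [← hfun] at hp
  refine hp.congr_deriv ?_
  have h1 : ((α : ℂ) - 1) = ((N - 1 : ℕ) : ℂ) := by
    rw [← hNα]
    push_cast [Nat.cast_sub hN]
    ring
  rw [h1, Complex.cpow_natCast, ← hNα]
  push_cast
  ring

lemma inner_bound {z : ℂ} (hz : ‖z‖ ≤ ρ) :
    α/2 * ‖besselG α z‖ + ‖z‖/2 * ‖besselGD α z‖ ≤ 3 / Real.Gamma α := by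
  have hαpos := alpha_pos hρ hα
  have hα10 := alpha_ten hρ hα
  have hΓ : (0:ℝ) < Real.Gamma α := Real.Gamma_pos_of_pos hαpos
  have hΓ1 : Real.Gamma (α + 1) = α * Real.Gamma α := Real.Gamma_add_one hαpos.ne'
  have hz1 : ‖z‖ ≤ ρ + 1 := by linarith
  have hg1 := besselG_norm_le hρ hα hz1
  have hg2 := besselGD_norm_le hρ hα hz1
  have hg1n : (0:ℝ) ≤ ‖besselG α z‖ := norm_nonneg _
  have hg2n : (0:ℝ) ≤ ‖besselGD α z‖ := norm_nonneg _
  have hzn : (0:ℝ) ≤ ‖z‖ := norm_nonneg _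
  rw [hΓ1] at hg1 hg2
  have e1 : α * Real.Gamma α * ‖besselG α z‖ ≤ 40/39 := by
    have h := mul_le_mul_of_nonneg_left hg1 (le_of_lt (by positivity : (0:ℝ) < α * Real.Gamma α))
    calc α * Real.Gamma α * ‖besselG α z‖ ≤
        α * Real.Gamma α * (1 / (α * Real.Gamma α) * (40/39)) := h
    _ = 40/39 := by field_simp
  have e2 : (ρ+1) * (α * Real.Gamma α) * ‖besselGD α z‖ ≤ 80/39 := by
    have hpos : (0:ℝ) < (ρ+1) * (α * Real.Gamma α) := by positivity
    have h := mul_le_mul_of_nonneg_left hg2 hpos.le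
    calc (ρ+1) * (α * Real.Gamma α) * ‖besselGD α z‖ ≤
        (ρ+1) * (α * Real.Gamma α) * (2/(ρ+1) * (1 / (α * Real.Gamma α)) * (40/39)) := h
    _ = 80/39 := by field_simp; ring
  have k2 : (ρ+1) * (Real.Gamma α * ‖besselGD α z‖) ≤ 8/39 := by
    nlinarith [mul_nonneg (mul_nonneg (show (0:ℝ) ≤ ρ+1 by linarith) hΓ.le) hg2n]
  have k2' : ‖z‖/2 * ‖besselGD α z‖ * Real.Gamma α ≤ 4/39 := by
    nlinarith [mul_nonneg hΓ.le hg2n]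
  have k1 : α/2 * ‖besselG α z‖ * Real.Gamma α ≤ 20/39 := by nlinarith [e1]
  rw [le_div_iff₀ hΓ]
  nlinarith [k1, k2']

lemma good_case {z : ℂ} (hz : ‖z‖ ≤ ρ) (hzne : z ≠ 0)
    (hD : HasDerivAt (fun w : ℂ => (w / 2) ^ (α : ℂ))
      ((α : ℂ) * (z / 2) ^ ((α : ℂ) - 1) * (1 / 2)) z) :
    ‖deriv (besselJ α) z‖ ≤ 3 * (‖z‖ / 2) ^ (α - 1) / Real.Gamma α := by
  have hαpos := alpha_pos hρ hα
  have hΓ : (0:ℝ) < Real.Gamma α := Real.Gamma_pos_of_pos hαpos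
  have hz1 : ‖z‖ < ρ + 1 := by linarith
  have hG := besselG_hasDerivAt hρ hα hz1
  have hprod := hD.fun_mul hG
  rw [besselJ_eq hρ hα, hprod.deriv]
  have hz2 : z / 2 ≠ 0 := div_ne_zero hzne two_ne_zero
  have hsplit : (z / 2) ^ (α : ℂ) = (z / 2) ^ ((α : ℂ) - 1) * (z / 2) := by
    rw [show (α : ℂ) = ((α : ℂ) - 1) + 1 by ring, Complex.cpow_add _ _ hz2,
      Complex.cpow_one]
    ring_nf
  rw [hsplit]
  have hD2 : (α : ℂ) * (z / 2) ^ ((α : ℂ) - 1) * (1 / 2) * besselG α z +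
      (z / 2) ^ ((α : ℂ) - 1) * (z / 2) * besselGD α z =
      (z / 2) ^ ((α : ℂ) - 1) *
        ((α : ℂ) * (1 / 2) * besselG α z + (z / 2) * besselGD α z) := by ring
  rw [hD2, norm_mul]
  have hA : ‖(z / 2) ^ ((α : ℂ) - 1)‖ = (‖z‖ / 2) ^ (α - 1) := by
    rw [show ((α : ℂ) - 1) = ((α - 1 : ℝ) : ℂ) by push_cast; ring]
    rw [Complex.norm_cpow_real]
    congr 1
    rw [norm_div, Complex.norm_ofNat]
  rw [hA]
  have hinner : ‖(α : ℂ) * (1 / 2) * besselG α z + (z / 2) * besselGD α z‖ ≤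
      3 / Real.Gamma α := by
    refine (norm_add_le _ _).trans ?_
    have ha : ‖(α : ℂ)‖ = α := by
      rw [Complex.norm_real, Real.norm_eq_abs, abs_of_pos hαpos]
    have hhalf : ‖(1/2 : ℂ)‖ = 1/2 := by norm_num
    have h1 : ‖(α : ℂ) * (1 / 2) * besselG α z‖ = α/2 * ‖besselG α z‖ := by
      rw [norm_mul, norm_mul, ha, hhalf]
      ring
    have h2 : ‖(z / 2) * besselGD α z‖ = ‖z‖/2 * ‖besselGD α z‖ := by
      rw [norm_mul, norm_div]
      norm_num
    rw [h1, h2]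
    exact inner_bound hρ hα hz
  calc (‖z‖ / 2) ^ (α - 1) * ‖(α : ℂ) * (1 / 2) * besselG α z + (z / 2) * besselGD α z‖
      ≤ (‖z‖ / 2) ^ (α - 1) * (3 / Real.Gamma α) :=
        mul_le_mul_of_nonneg_left hinner (Real.rpow_nonneg (by positivity) _)
  _ = 3 * (‖z‖ / 2) ^ (α - 1) / Real.Gamma α := by ring

lemma besselJ_norm_eq {w : ℂ} :
    ‖besselJ α w‖ = (‖w‖ / 2) ^ (α : ℝ) * ‖besselG α w‖ := by
  rw [besselJ_eq hρ hα]
  simp only [norm_mul]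
  congr 1
  rw [Complex.norm_cpow_real, norm_div, Complex.norm_ofNat]

lemma deriv_at_zero : deriv (besselJ α) 0 = 0 := by
  have hαpos := alpha_pos hρ hα
  have hα10 := alpha_ten hρ hα
  have hJ0 : besselJ α 0 = 0 := by
    rw [besselJ_eq hρ hα]
    simp only [zero_div]
    rw [Complex.zero_cpow (by simpa using hαpos.ne' : (α:ℂ) ≠ 0), zero_mul]
  have hD : HasDerivAt (besselJ α) 0 0 := by
    rw [hasDerivAt_iff_isLittleO]
    simp only [hJ0, sub_zero, smul_zero]
    have hBig : besselJ α =O[nhds (0:ℂ)] fun w => w ^ 2 := by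
      rw [Asymptotics.isBigO_iff]
      refine ⟨(1 / Real.Gamma (α+1)) * (40/39) / 4, ?_⟩
      have hball : Metric.ball (0:ℂ) (min 2 (ρ+1)) ∈ nhds (0:ℂ) :=
        Metric.ball_mem_nhds 0 (by positivity)
      filter_upwards [hball] with w hw
      rw [Metric.mem_ball, dist_zero_right, lt_min_iff] at hw
      have hw1 : ‖w‖ ≤ ρ + 1 := hw.2.le
      have hGb := besselG_norm_le hρ hα hw1
      rw [besselJ_norm_eq hρ hα]
      have hxle : (‖w‖/2 : ℝ) ≤ 1 := by
        have := hw.1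
        linarith
      have hx0 : (0:ℝ) ≤ ‖w‖/2 := by positivity
      have hstep : (‖w‖ / 2) ^ (α : ℝ) ≤ (‖w‖/2) ^ (2:ℝ) := by
        rcases eq_or_lt_of_le hx0 with h0 | h0
        · rw [← h0, Real.zero_rpow (by linarith), Real.zero_rpow (by norm_num)]
        · exact Real.rpow_le_rpow_of_exponent_ge h0 hxle (by linarith)
      have h2 : (‖w‖/2 : ℝ) ^ (2:ℝ) = ‖w‖^2 / 4 := by
        rw [show ((2:ℝ) = ((2:ℕ):ℝ)) by norm_num, Real.rpow_natCast]
        ring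
      have hGn : (0:ℝ) ≤ ‖besselG α w‖ := norm_nonneg _
      calc (‖w‖ / 2) ^ (α : ℝ) * ‖besselG α w‖
          ≤ (‖w‖^2/4) * ((1 / Real.Gamma (α+1)) * (40/39)) := by
            apply mul_le_mul (by rw [← h2]; exact hstep) hGb hGn (by positivity)
      _ = (1 / Real.Gamma (α+1)) * (40/39) / 4 * ‖w ^ 2‖ := by
            rw [norm_pow]
            ring
    have hsmall : (fun w : ℂ => w ^ 2) =o[nhds (0:ℂ)] fun w : ℂ => w := by
      have := Asymptotics.isLittleO_pow_pow (𝕜 := ℂ) (show 1 < 2 by norm_num)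
      simpa using this
    exact hBig.trans_isLittleO hsmall
  exact hD.deriv

lemma not_diff {z : ℂ} (hre : z.re < 0) (him : z.im = 0) (hzρ : ‖z‖ ≤ ρ)
    (hnotint : ∀ k : ℤ, α ≠ (k : ℝ)) : ¬ DifferentiableAt ℂ (besselJ α) z := by
  intro hdiff
  have hz : z ≠ 0 := by
    intro h
    rw [h] at hre
    simp at hre
  have hz2 : z / 2 ≠ 0 := div_ne_zero hz two_ne_zero
  have hzlt : ‖z‖ < ρ + 1 := by linarith
  have hGd : DifferentiableAt ℂ (besselG α) z :=
    (besselG_hasDerivAt hρ hα hzlt).differentiableAt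
  have hGne : besselG α z ≠ 0 := besselG_ne_zero hρ hα hzlt.le
  have hq : DifferentiableAt ℂ (fun w => besselJ α w / besselG α w) z := hdiff.div hGd hGne
  have hcont : ContinuousAt (fun w => besselJ α w / besselG α w) z := hq.continuousAt
  set S : Set ℂ := { w : ℂ | w.im < 0 } with hS
  haveI hne : (nhdsWithin z S).NeBot := by
    rw [← mem_closure_iff_nhdsWithin_neBot, hS, closure_setOf_im_lt]
    simp [him]
  have hval : besselJ α z / besselG α z = (z/2) ^ (α:ℂ) := by
    rw [besselJ_eq hρ hα]
    field_simp
  have hlim1 : Filter.Tendsto (fun w => besselJ α w / besselG α w) (nhdsWithin z S)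
      (nhds ((z/2) ^ (α:ℂ))) := by
    have := hcont.tendsto
    rw [hval] at this
    exact this.mono_left nhdsWithin_le_nhds
  -- second limit via log from below
  have hdiv2 : Filter.Tendsto (fun w : ℂ => w / 2) (nhdsWithin z S) (nhdsWithin (z/2) S) := by
    apply ContinuousWithinAt.tendsto_nhdsWithin
    · exact (continuous_id.div_const 2).continuousWithinAt
    · intro w hw
      simp only [hS, Set.mem_setOf_eq] at hw ⊢
      rw [Complex.div_im]
      simp
      linarith
  have hre2 : (z/2).re < 0 := by
    rw [Complex.div_re]
    simp
    linarith
  have him2 : (z/2).im = 0 := by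
    rw [Complex.div_im]
    simp [him]
  have hlog : Filter.Tendsto (fun w : ℂ => Complex.log (w/2)) (nhdsWithin z S)
      (nhds ((Real.log (‖z/2‖) : ℂ) - Real.pi * Complex.I)) :=
    (Complex.tendsto_log_nhdsWithin_im_neg_of_re_neg_of_im_zero hre2 him2).comp hdiv2
  have hexp : Filter.Tendsto (fun w => besselJ α w / besselG α w) (nhdsWithin z S)
      (nhds (Complex.exp (((Real.log (‖z/2‖) : ℂ) - Real.pi * Complex.I) * (α:ℂ)))) := by
    have h1 : Filter.Tendsto (fun w : ℂ => Complex.exp (Complex.log (w/2) * (α:ℂ)))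
        (nhdsWithin z S)
        (nhds (Complex.exp (((Real.log (‖z/2‖) : ℂ) - Real.pi * Complex.I) * (α:ℂ)))) :=
      (Complex.continuous_exp.tendsto _).comp (hlog.mul_const (α:ℂ))
    refine h1.congr' ?_
    have hzpos : (0:ℝ) < ‖z‖ := norm_pos_iff.mpr hz
    have hrpos : (0:ℝ) < min ‖z‖ (ρ + 1 - ‖z‖) := lt_min hzpos (by linarith)
    have hball : Metric.ball z (min ‖z‖ (ρ + 1 - ‖z‖)) ∈ nhdsWithin z S :=
      nhdsWithin_le_nhds (Metric.ball_mem_nhds z hrpos)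
    filter_upwards [hball] with w hw
    rw [Metric.mem_ball, dist_eq_norm, lt_min_iff] at hw
    have hwne : w ≠ 0 := by
      intro h0
      rw [h0, zero_sub, norm_neg] at hw
      exact lt_irrefl _ hw.1
    have hwρ : ‖w‖ ≤ ρ + 1 := by
      have := norm_sub_norm_le w z
      have h2 := hw.2
      linarith
    have hw2 : w / 2 ≠ 0 := div_ne_zero hwne two_ne_zero
    have hGw : besselG α w ≠ 0 := besselG_ne_zero hρ hα hwρ
    rw [besselJ_eq hρ hα]
    simp only
    rw [mul_div_assoc, div_self hGw, mul_one, Complex.cpow_def_of_ne_zero hw2]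
  have huniq := tendsto_nhds_unique hlim1 hexp
  have hlogz : Complex.log (z/2) = (Real.log (‖z/2‖) : ℂ) + Real.pi * Complex.I := by
    have harg : Complex.arg (z/2) = Real.pi := Complex.arg_eq_pi_iff.mpr ⟨hre2, him2⟩
    rw [Complex.log, harg]
  rw [Complex.cpow_def_of_ne_zero hz2, hlogz, Complex.exp_eq_exp_iff_exists_int] at huniq
  obtain ⟨k, hk⟩ := huniq
  have hαk : ((α:ℂ) - k) * (2 * Real.pi * Complex.I) = 0 := by linear_combination hk
  have h2π : (2 * (Real.pi:ℂ) * Complex.I) ≠ 0 := by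
    simp [Complex.I_ne_zero, Real.pi_ne_zero]
  rcases mul_eq_zero.mp hαk with h | h
  · have : (α:ℂ) = (k:ℂ) := by linear_combination h
    exact hnotint k (by exact_mod_cast this)
  · exact h2π h

end bounds

/-- Bessel estimate (5.16): for `|z| ≤ ρ`, `α = n + (d−2)/2`, `d ≥ 2`,
`n ≥ 10(ρ+1)²`, one has `|J'_α(z)| ≤ 3 (|z|/2)^{α−1}/Γ(α)`. -/
theorem stmt_5 (ρ : ℝ) (hρ : 0 < ρ) (d n : ℕ) (hd : 2 ≤ d)
    (hn : 10 * (ρ + 1) ^ 2 ≤ (n : ℝ)) (z : ℂ) (hz : ‖z‖ ≤ ρ)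
    (α : ℝ) (hα : α = (n : ℝ) + ((d : ℝ) - 2) / 2) :
    ‖deriv (besselJ α) z‖ ≤ 3 * (‖z‖ / 2) ^ (α - 1) / Real.Gamma α := by
  have hd2 : (2:ℝ) ≤ (d:ℝ) := by exact_mod_cast hd
  have hα' : 10 * (ρ + 1) ^ 2 ≤ α := by
    rw [hα]
    have : (0:ℝ) ≤ ((d:ℝ) - 2) / 2 := by linarith
    linarith
  have hαpos : (0:ℝ) < α := alpha_pos hρ hα'
  have hα10 : (10:ℝ) ≤ α := alpha_ten hρ hα'
  have hΓ : (0:ℝ) < Real.Gamma α := Real.Gamma_pos_of_pos hαpos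
  rcases eq_or_ne z 0 with rfl | hz0
  · rw [deriv_at_zero hρ hα', norm_zero, zero_div,
      Real.zero_rpow (by linarith : α - 1 ≠ 0), mul_zero, zero_div]
  · by_cases hslit : z ∈ Complex.slitPlane
    · exact good_case hρ hα' hz hz0 (cpow_slit_hasDerivAt hρ hα' hslit)
    · rw [Complex.mem_slitPlane_iff] at hslit
      push_neg at hslit
      obtain ⟨hrele, him⟩ := hslit
      have hre : z.re < 0 := by
        rcases lt_or_eq_of_le hrele with h | h
        · exact h
        · exfalso
          apply hz0
          apply Complex.ext
          · simp [h]
          · simp [him]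
      rcases Nat.even_or_odd d with he | ho
      · obtain ⟨k, hk⟩ := he
        have hk1 : 1 ≤ k := by omega
        have hn10 : (1:ℝ) ≤ (n:ℝ) := by nlinarith
        have hn1 : 1 ≤ n := by exact_mod_cast hn10
        have hN1 : 1 ≤ n + (k - 1) := by omega
        have hNα : ((n + (k - 1) : ℕ) : ℝ) = α := by
          rw [hα]
          have hdk : (d:ℝ) = 2 * (k:ℝ) := by
            rw [hk]; push_cast; ring
          push_cast [Nat.cast_sub hk1]
          rw [hdk]
          ring
        exact good_case hρ hα' hz hz0 (cpow_nat_hasDerivAt hρ hα' hN1 hNα hz0)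
      · have hnotint : ∀ j : ℤ, α ≠ (j : ℝ) := by
          intro j hj
          obtain ⟨k, hk⟩ := ho
          rw [hα] at hj
          have hdk : (d:ℝ) = 2 * (k:ℝ) + 1 := by rw [hk]; push_cast; ring
          rw [hdk] at hj
          have : (2 * (k:ℤ) + 1 : ℝ) = 2 * ((j:ℝ) - (n:ℝ)) + 2 := by push_cast; linarith
          have h2 : (2 * (k:ℤ) + 1 : ℤ) = 2 * (j - (n:ℤ)) + 2 := by exact_mod_cast this
          omega
        have hnd := not_diff hρ hα' hre him hz hnotint
        rw [deriv_zero_of_not_differentiableAt hnd, norm_zero]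
        have h1 : (0:ℝ) ≤ (‖z‖ / 2) ^ (α - 1) := Real.rpow_nonneg (by positivity) _
        positivity
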